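/- If $X \overset{d}{=} e^{-t/2} X_0 + \sqrt{1-e^{-t}}\,\epsilon$ where $X_0$ has sub-Gaussian tails (in particular $\mathbb{E}\|X_0\|^2 < \infty$) and $\epsilon \sim N(0, I_d)$ is independent of $X_0$, then the total variation distance between the law of $X(t)$ and $N(0, I_d)$ satisfies $d_{TV}(\mathcal{L}(X(t)), N(0,I_d)) \leq C e^{-t/2}$ for some constant $C$ depending only on the law of $X_0$, hence $X(t)$ converges to $N(0, I_d)$ as $t \to \infty$. -/

import Mathlib

open MeasureTheory ProbabilityTheory Filter

/-- Total variation distance between two measures: the supremum over measurable sets `A`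
of `|μ A - ν A|`. -/
noncomputable def tvDist {α : Type*} [MeasurableSpace α] (μ ν : Measure α) : ℝ :=
  ⨆ A : {s : Set α // MeasurableSet s}, |(μ A).toReal - (ν A).toReal|

open Real
open scoped NNReal ENNReal

section TVAux
variable {α : Type*} [MeasurableSpace α]

lemma tvDist_le_of_bound {μ ν : Measure α} {B : ℝ}
    (hB : ∀ A : Set α, MeasurableSet A → |(μ A).toReal - (ν A).toReal| ≤ B) :
    tvDist μ ν ≤ B := by
  have : Nonempty {s : Set α // MeasurableSet s} := ⟨⟨∅, MeasurableSet.empty⟩⟩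
  exact ciSup_le fun A => hB A.1 A.2

lemma tvDist_nonneg' {μ ν : Measure α} : 0 ≤ tvDist μ ν :=
  Real.iSup_nonneg fun _ => abs_nonneg _

lemma measure_toReal_le_one {μ : Measure α} [IsProbabilityMeasure μ] (A : Set α) :
    (μ A).toReal ≤ 1 := by
  have h := measure_mono (Set.subset_univ A) (μ := μ)
  rw [measure_univ] at h
  simpa using ENNReal.toReal_mono (by simp) h

lemma tvDist_le_one {μ ν : Measure α} [IsProbabilityMeasure μ] [IsProbabilityMeasure ν] :
    tvDist μ ν ≤ 1 := by
  refine tvDist_le_of_bound fun A _ => abs_le.2 ⟨?_, ?_⟩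
  · have := measure_toReal_le_one (μ := ν) A
    have h0 : 0 ≤ (μ A).toReal := ENNReal.toReal_nonneg
    linarith
  · have := measure_toReal_le_one (μ := μ) A
    have h0 : 0 ≤ (ν A).toReal := ENNReal.toReal_nonneg
    linarith

end TVAux

lemma cross_bound {μ ν : Measure ℝ} [IsProbabilityMeasure μ] [IsProbabilityMeasure ν]
    {H : Set ℝ} (hH : MeasurableSet H)
    (h1 : ∀ B : Set ℝ, MeasurableSet B → B ⊆ Hᶜ → μ B ≤ ν B)
    (h2 : ∀ B : Set ℝ, MeasurableSet B → B ⊆ H → ν B ≤ μ B)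
    {S : Set ℝ} (hS : MeasurableSet S) :
    |(μ S).toReal - (ν S).toReal| ≤ (μ H).toReal - (ν H).toReal := by
  have key : ∀ (ρ : Measure ℝ) [IsProbabilityMeasure ρ] (T U : Set ℝ), MeasurableSet U →
      (ρ (T ∩ U)).toReal + (ρ (T \ U)).toReal = (ρ T).toReal := by
    intro ρ _ T U hU
    rw [← ENNReal.toReal_add (measure_ne_top _ _) (measure_ne_top _ _),
      measure_inter_add_diff T hU]
  have mono : ∀ {ρ σ : Measure ℝ} {T : Set ℝ} [IsProbabilityMeasure σ],
      ρ T ≤ σ T → (ρ T).toReal ≤ (σ T).toReal := by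
    intro ρ σ T _ h
    exact ENNReal.toReal_mono (measure_ne_top _ _) h
  have eμS := key μ S H hH
  have eνS := key ν S H hH
  have eμH := key μ H S hS
  have eνH := key ν H S hS
  have eμHc := key μ Hᶜ S hS
  have eνHc := key ν Hᶜ S hS
  have cμ : (μ H).toReal + (μ Hᶜ).toReal = 1 := by
    rw [← ENNReal.toReal_add (measure_ne_top _ _) (measure_ne_top _ _),
      measure_add_measure_compl hH]
    simp
  have cν : (ν H).toReal + (ν Hᶜ).toReal = 1 := by
    rw [← ENNReal.toReal_add (measure_ne_top _ _) (measure_ne_top _ _),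
      measure_add_measure_compl hH]
    simp
  have i1 : (μ (S \ H)).toReal ≤ (ν (S \ H)).toReal :=
    mono (h1 _ (hS.diff hH) fun x hx => hx.2)
  have i2 : (ν (H \ S)).toReal ≤ (μ (H \ S)).toReal :=
    mono (h2 _ (hH.diff hS) fun x hx => hx.1)
  have i3 : (ν (S ∩ H)).toReal ≤ (μ (S ∩ H)).toReal :=
    mono (h2 _ (hS.inter hH) fun x hx => hx.2)
  have i4 : (μ (Hᶜ \ S)).toReal ≤ (ν (Hᶜ \ S)).toReal :=
    mono (h1 _ (hH.compl.diff hS) fun x hx => hx.1)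
  have hHS : H ∩ S = S ∩ H := Set.inter_comm _ _
  have hHcS : Hᶜ ∩ S = S \ H := by rw [Set.inter_comm]; rfl
  rw [hHS] at eμH eνH
  rw [hHcS] at eμHc eνHc
  rw [abs_le]
  constructor <;> linarith

section Gauss1D

lemma gaussianPDF_le_one {m : ℝ} {v : ℝ≥0} (hv : (1:ℝ) ≤ 2 * π * v) (x : ℝ) :
    gaussianPDF m v x ≤ 1 := by
  rw [gaussianPDF]
  refine ENNReal.ofReal_le_one.2 ?_
  rw [gaussianPDFReal]
  have h1 : Real.sqrt 1 ≤ Real.sqrt (2 * π * v) := Real.sqrt_le_sqrt hv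
  rw [Real.sqrt_one] at h1
  have h2 : (Real.sqrt (2 * π * v))⁻¹ ≤ 1 := by
    rw [inv_le_one_iff₀]; right; exact h1
  have h3 : rexp (-(x - m) ^ 2 / (2 * v)) ≤ 1 := by
    rw [Real.exp_le_one_iff]
    apply div_nonpos_of_nonpos_of_nonneg
    · simp [sq_nonneg]
    · positivity
  calc (Real.sqrt (2 * π * v))⁻¹ * rexp (-(x - m) ^ 2 / (2 * v)) ≤ 1 * 1 :=
        mul_le_mul h2 h3 (Real.exp_nonneg _) zero_le_one
    _ = 1 := by norm_num

lemma gauss_band {m : ℝ} {v : ℝ≥0} (hv : (1:ℝ) ≤ 2 * π * v) (hv0 : v ≠ 0) (T : Set ℝ) :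
    gaussianReal m v T ≤ volume T := by
  rw [gaussianReal_apply _ hv0]
  calc ∫⁻ x in T, gaussianPDF m v x ≤ ∫⁻ _x in T, 1 :=
        lintegral_mono fun x => gaussianPDF_le_one hv x
    _ = volume T := setLIntegral_one T

lemma two_pi_v_ge {v : ℝ≥0} (hv : (1:ℝ)/2 ≤ v) : (1:ℝ) ≤ 2 * π * v := by
  nlinarith [Real.pi_gt_three]

lemma gauss_mono_of_pdf_le {m₁ m₂ : ℝ} {v₁ v₂ : ℝ≥0} (hv₁ : v₁ ≠ 0) (hv₂ : v₂ ≠ 0) {B : Set ℝ}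
    (h : ∀ x ∈ B, gaussianPDFReal m₁ v₁ x ≤ gaussianPDFReal m₂ v₂ x) :
    gaussianReal m₁ v₁ B ≤ gaussianReal m₂ v₂ B := by
  rw [gaussianReal_apply _ hv₁, gaussianReal_apply _ hv₂]
  exact setLIntegral_mono (measurable_gaussianPDF _ _) fun x hx =>
    ENNReal.ofReal_le_ofReal (h x hx)

/-- Core shift bound for nonnegative mean. -/
lemma gauss_shift_core {m : ℝ} (hm : 0 ≤ m) {v : ℝ≥0} (hv : (1:ℝ)/2 ≤ v)
    {S : Set ℝ} (hS : MeasurableSet S) :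
    |(gaussianReal m v S).toReal - (gaussianReal 0 v S).toReal| ≤ m := by
  have hπ := two_pi_v_ge hv
  have hvR : (0:ℝ) < (v:ℝ) := by linarith
  have hv0 : v ≠ 0 := by
    intro h
    rw [h] at hvR
    norm_num at hvR
  have hpdf : ∀ x : ℝ, x ≤ m / 2 → gaussianPDFReal m v x ≤ gaussianPDFReal 0 v x := by
    intro x hx
    rw [gaussianPDFReal, gaussianPDFReal]
    refine mul_le_mul_of_nonneg_left ?_ (by positivity)
    refine Real.exp_le_exp.2 ?_
    refine (div_le_div_iff_of_pos_right (by positivity)).2 ?_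
    nlinarith
  have hpdf' : ∀ x : ℝ, m / 2 ≤ x → gaussianPDFReal 0 v x ≤ gaussianPDFReal m v x := by
    intro x hx
    rw [gaussianPDFReal, gaussianPDFReal]
    refine mul_le_mul_of_nonneg_left ?_ (by positivity)
    refine Real.exp_le_exp.2 ?_
    refine (div_le_div_iff_of_pos_right (by positivity)).2 ?_
    nlinarith
  have h1 : ∀ B : Set ℝ, MeasurableSet B → B ⊆ (Set.Ioi (m/2))ᶜ →
      gaussianReal m v B ≤ gaussianReal 0 v B := by
    intro B hB hBsub
    refine gauss_mono_of_pdf_le hv0 hv0 fun x hx => hpdf x ?_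
    have := hBsub hx
    simp only [Set.mem_compl_iff, Set.mem_Ioi, not_lt] at this
    exact this
  have h2 : ∀ B : Set ℝ, MeasurableSet B → B ⊆ Set.Ioi (m/2) →
      gaussianReal 0 v B ≤ gaussianReal m v B := by
    intro B hB hBsub
    refine gauss_mono_of_pdf_le hv0 hv0 fun x hx => hpdf' x ?_
    exact (hBsub hx).le
  refine le_trans (cross_bound measurableSet_Ioi h1 h2 hS) ?_
  have hmap : gaussianReal m v = (gaussianReal 0 v).map (· + m) := by
    rw [gaussianReal_map_add_const]
    simp
  have hμH : gaussianReal m v (Set.Ioi (m/2)) = gaussianReal 0 v (Set.Ioi (-(m/2))) := by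
    rw [hmap, Measure.map_apply (measurable_add_const m) measurableSet_Ioi]
    congr 1
    ext x
    simp only [Set.mem_preimage, Set.mem_Ioi]
    constructor <;> intro h <;> linarith
  have hsplit : gaussianReal 0 v (Set.Ioi (-(m/2)))
      = gaussianReal 0 v (Set.Ioc (-(m/2)) (m/2)) + gaussianReal 0 v (Set.Ioi (m/2)) := by
    rw [← measure_union Set.Ioc_disjoint_Ioi_same measurableSet_Ioi,
      Set.Ioc_union_Ioi_eq_Ioi (by linarith)]
  have hband : (gaussianReal 0 v (Set.Ioc (-(m/2)) (m/2))).toReal ≤ m := by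
    have h := gauss_band (m := 0) hπ hv0 (Set.Ioc (-(m/2)) (m/2))
    rw [Real.volume_Ioc] at h
    have h' := ENNReal.toReal_mono ENNReal.ofReal_ne_top h
    rw [ENNReal.toReal_ofReal (by linarith)] at h'
    linarith
  rw [hμH, hsplit, ENNReal.toReal_add (measure_ne_top _ _) (measure_ne_top _ _)]
  linarith

lemma gauss_shift_bound (m : ℝ) {v : ℝ≥0} (hv : (1:ℝ)/2 ≤ v)
    {S : Set ℝ} (hS : MeasurableSet S) :
    |(gaussianReal m v S).toReal - (gaussianReal 0 v S).toReal| ≤ |m| := by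
  rcases le_or_gt 0 m with hm | hm
  · rw [abs_of_nonneg hm]
    exact gauss_shift_core hm hv hS
  · rw [abs_of_neg hm]
    have hneg : ∀ μ₀ : ℝ, (gaussianReal μ₀ v).map (fun x : ℝ => -1 * x)
        = gaussianReal (-μ₀) v := by
      intro μ₀
      rw [show (fun x : ℝ => -1 * x) = ((-1 : ℝ) * ·) from rfl, gaussianReal_map_const_mul]
      congr 1
      · ring
      · ext
        simp
    have hpre : MeasurableSet ((fun x : ℝ => -1 * x) ⁻¹' S) := (measurable_const_mul _) hS
    have heq : ∀ μ₀ : ℝ, gaussianReal (-μ₀) v ((fun x : ℝ => -1 * x) ⁻¹' S)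
        = gaussianReal μ₀ v S := by
      intro μ₀
      rw [← hneg μ₀, Measure.map_apply (measurable_const_mul _) hpre]
      congr 1
      ext x
      simp
    have h := gauss_shift_core (m := -m) (by linarith) hv hpre
    have h0 : gaussianReal 0 v ((fun x : ℝ => -1 * x) ⁻¹' S) = gaussianReal 0 v S := by
      have := heq 0
      simpa using this
    rw [heq m, h0] at h
    exact h

set_option maxHeartbeats 1000000 in
lemma gauss_var_bound {v : ℝ≥0} (hv : (1:ℝ)/2 ≤ v) (hv1 : (v:ℝ) ≤ 1)
    {S : Set ℝ} (hS : MeasurableSet S) :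
    |(gaussianReal 0 v S).toReal - (gaussianReal 0 1 S).toReal| ≤ 4 * (1 - (v:ℝ)) := by
  rcases eq_or_lt_of_le hv1 with hveq | hvlt
  · have hv1' : v = 1 := NNReal.coe_injective (by rw [hveq, NNReal.coe_one])
    rw [hv1']
    norm_num
  have hπ := two_pi_v_ge hv
  have hvR : (0:ℝ) < (v:ℝ) := by linarith
  have hv0 : v ≠ 0 := by
    intro h
    rw [h] at hvR
    norm_num at hvR
  obtain ⟨L, hL0, hLle, hlog⟩ : ∃ L : ℝ, 0 ≤ L ∧ L ≤ (1 - (v:ℝ)) / (v:ℝ) ∧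
      Real.log (v:ℝ) = -L := by
    refine ⟨-Real.log (v:ℝ), ?_, ?_, by ring⟩
    · rw [neg_nonneg]
      exact Real.log_nonpos (by linarith) hv1
    · rw [← Real.log_inv]
      calc Real.log ((v:ℝ))⁻¹ ≤ ((v:ℝ))⁻¹ - 1 := Real.log_le_sub_one_of_pos (inv_pos.2 hvR)
        _ = (1 - (v:ℝ)) / (v:ℝ) := by field_simp
  obtain ⟨r, hr0, hr2, hr1⟩ : ∃ r : ℝ, 0 ≤ r ∧ r ^ 2 = (v:ℝ) * L / (1 - (v:ℝ)) ∧ r ≤ 1 := by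
    have hargnn : 0 ≤ (v:ℝ) * L / (1 - (v:ℝ)) :=
      div_nonneg (mul_nonneg hvR.le hL0) (by linarith)
    refine ⟨Real.sqrt ((v:ℝ) * L / (1 - (v:ℝ))), Real.sqrt_nonneg _, Real.sq_sqrt hargnn, ?_⟩
    have harg1 : (v:ℝ) * L / (1 - (v:ℝ)) ≤ 1 := by
      rw [div_le_one (by linarith)]
      calc (v:ℝ) * L ≤ (v:ℝ) * ((1 - (v:ℝ)) / (v:ℝ)) :=
            mul_le_mul_of_nonneg_left hLle hvR.le
        _ = 1 - (v:ℝ) := by field_simp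
    nlinarith [Real.sqrt_nonneg ((v:ℝ) * L / (1 - (v:ℝ))), Real.sq_sqrt hargnn]
  have hrL : r ^ 2 * (1 - (v:ℝ)) = (v:ℝ) * L := by
    rw [hr2, div_mul_cancel₀]
    have : (0:ℝ) < 1 - (v:ℝ) := by linarith
    exact this.ne'
  -- key pointwise pdf comparisons
  have hsplit : (Real.sqrt (2 * π * (v:ℝ)))⁻¹
      = (Real.sqrt (2 * π))⁻¹ * (Real.sqrt (v:ℝ))⁻¹ := by
    rw [Real.sqrt_mul (by positivity), mul_inv]
  have hc0' : 0 < Real.sqrt (v:ℝ) := Real.sqrt_pos.2 hvR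
  have key : ∀ x : ℝ, x ^ 2 * (1 - (v:ℝ)) ≤ (v:ℝ) * L →
      gaussianPDFReal 0 1 x ≤ gaussianPDFReal 0 v x := by
    intro x hx
    rw [gaussianPDFReal, gaussianPDFReal]
    simp only [NNReal.coe_one, mul_one, sub_zero]
    rw [hsplit, mul_assoc]
    refine mul_le_mul_of_nonneg_left ?_ (by positivity)
    have hmain : Real.sqrt (v:ℝ) * rexp (-x ^ 2 / 2) ≤ rexp (-x ^ 2 / (2 * (v:ℝ))) := by
      rw [show Real.sqrt (v:ℝ) = rexp (Real.log (Real.sqrt (v:ℝ))) from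
        (Real.exp_log hc0').symm, ← Real.exp_add]
      refine Real.exp_le_exp.2 ?_
      rw [Real.log_sqrt hvR.le]
      have hexpand : -x ^ 2 / (2 * (v:ℝ)) - (Real.log (v:ℝ) / 2 + -x ^ 2 / 2)
          = ((v:ℝ) * L - x ^ 2 * (1 - (v:ℝ))) / (2 * (v:ℝ)) := by
        rw [hlog]
        field_simp
        ring
      have hnn : 0 ≤ ((v:ℝ) * L - x ^ 2 * (1 - (v:ℝ))) / (2 * (v:ℝ)) :=
        div_nonneg (by linarith) (by linarith)
      linarith [hexpand ▸ hnn]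
    have h2 := mul_le_mul_of_nonneg_left hmain (inv_nonneg.2 hc0'.le)
    rwa [← mul_assoc, inv_mul_cancel₀ hc0'.ne', one_mul] at h2
  have key' : ∀ x : ℝ, (v:ℝ) * L ≤ x ^ 2 * (1 - (v:ℝ)) →
      gaussianPDFReal 0 v x ≤ gaussianPDFReal 0 1 x := by
    intro x hx
    rw [gaussianPDFReal, gaussianPDFReal]
    simp only [NNReal.coe_one, mul_one, sub_zero]
    rw [hsplit, mul_assoc]
    refine mul_le_mul_of_nonneg_left ?_ (by positivity)
    have hmain : rexp (-x ^ 2 / (2 * (v:ℝ))) ≤ Real.sqrt (v:ℝ) * rexp (-x ^ 2 / 2) := by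
      rw [show Real.sqrt (v:ℝ) = rexp (Real.log (Real.sqrt (v:ℝ))) from
        (Real.exp_log hc0').symm, ← Real.exp_add]
      refine Real.exp_le_exp.2 ?_
      rw [Real.log_sqrt hvR.le]
      have hexpand : -x ^ 2 / (2 * (v:ℝ)) - (Real.log (v:ℝ) / 2 + -x ^ 2 / 2)
          = ((v:ℝ) * L - x ^ 2 * (1 - (v:ℝ))) / (2 * (v:ℝ)) := by
        rw [hlog]
        field_simp
        ring
      have hnp : ((v:ℝ) * L - x ^ 2 * (1 - (v:ℝ))) / (2 * (v:ℝ)) ≤ 0 :=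
        div_nonpos_of_nonpos_of_nonneg (by linarith) (by linarith)
      linarith [hexpand ▸ hnp]
    have h2 := mul_le_mul_of_nonneg_left hmain (inv_nonneg.2 hc0'.le)
    rwa [← mul_assoc, inv_mul_cancel₀ hc0'.ne', one_mul] at h2
  -- cross bound with H = Icc (-r) r
  have h2c : ∀ B : Set ℝ, MeasurableSet B → B ⊆ Set.Icc (-r) r →
      gaussianReal 0 1 B ≤ gaussianReal 0 v B := by
    intro B hB hBsub
    refine gauss_mono_of_pdf_le one_ne_zero hv0 fun x hx => key x ?_
    obtain ⟨hx1, hx2⟩ := hBsub hx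
    have hx2' : x ^ 2 ≤ r ^ 2 := by nlinarith
    nlinarith
  have h1c : ∀ B : Set ℝ, MeasurableSet B → B ⊆ (Set.Icc (-r) r)ᶜ →
      gaussianReal 0 v B ≤ gaussianReal 0 1 B := by
    intro B hB hBsub
    refine gauss_mono_of_pdf_le hv0 one_ne_zero fun x hx => key' x ?_
    have hx' := hBsub hx
    simp only [Set.mem_compl_iff, Set.mem_Icc, not_and, not_le] at hx'
    have hx2' : r ^ 2 ≤ x ^ 2 := by
      rcases le_or_gt (-r) x with h | h
      · have := hx' h
        nlinarith
      · nlinarith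
    nlinarith
  refine le_trans (cross_bound measurableSet_Icc h1c h2c hS) ?_
  -- evaluation
  obtain ⟨c, hc0, hc2, hc1⟩ : ∃ c : ℝ, 0 < c ∧ c ^ 2 = (v:ℝ) ∧ c ≤ 1 := by
    refine ⟨Real.sqrt (v:ℝ), hc0', Real.sq_sqrt hvR.le, ?_⟩
    nlinarith [Real.sq_sqrt hvR.le, hc0']
  have hmapv : (gaussianReal 0 1).map (fun x : ℝ => c * x) = gaussianReal 0 v := by
    rw [show (fun x : ℝ => c * x) = (c * ·) from rfl, gaussianReal_map_const_mul]
    congr 1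
    · ring
    · ext
      push_cast
      simp [hc2]
  obtain ⟨R, hR0, hrR⟩ : ∃ R : ℝ, 0 ≤ R ∧ r = c * R :=
    ⟨r / c, div_nonneg hr0 hc0.le, by field_simp⟩
  have hRr : r ≤ R := by nlinarith
  have hμH : gaussianReal 0 v (Set.Icc (-r) r) = gaussianReal 0 1 (Set.Icc (-R) R) := by
    have hset : (fun x : ℝ => c * x) ⁻¹' Set.Icc (-r) r = Set.Icc (-R) R := by
      ext x
      simp only [Set.mem_preimage, Set.mem_Icc]
      rw [hrR]
      constructor
      · rintro ⟨ha, hb⟩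
        constructor <;> nlinarith
      · rintro ⟨ha, hb⟩
        constructor <;> nlinarith
    rw [← hmapv, Measure.map_apply (measurable_const_mul c) measurableSet_Icc, hset]
  have hsub : Set.Icc (-r) r ⊆ Set.Icc (-R) R := Set.Icc_subset_Icc (by linarith) hRr
  have hsplit2 : gaussianReal 0 1 (Set.Icc (-R) R)
      = gaussianReal 0 1 (Set.Icc (-r) r)
        + gaussianReal 0 1 (Set.Icc (-R) R \ Set.Icc (-r) r) := by
    rw [← measure_inter_add_diff (Set.Icc (-R) R) measurableSet_Icc,
      Set.inter_eq_self_of_subset_right hsub]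
  have hdiffsub : Set.Icc (-R) R \ Set.Icc (-r) r ⊆ Set.Ico (-R) (-r) ∪ Set.Ioc r R := by
    rintro x ⟨⟨hx1, hx2⟩, hx3⟩
    simp only [Set.mem_Icc, not_and, not_le] at hx3
    rcases lt_or_ge x (-r) with h | h
    · left
      exact ⟨hx1, h⟩
    · right
      exact ⟨hx3 h, hx2⟩
  have hπ1 : (1:ℝ) ≤ 2 * π * ((1:ℝ≥0):ℝ) := by
    push_cast
    nlinarith [Real.pi_gt_three]
  have hdiffbound : (gaussianReal 0 1 (Set.Icc (-R) R \ Set.Icc (-r) r)).toReal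
      ≤ 2 * (R - r) := by
    have hb1 := gauss_band (m := 0) hπ1 one_ne_zero (Set.Ico (-R) (-r))
    have hb2 := gauss_band (m := 0) hπ1 one_ne_zero (Set.Ioc r R)
    rw [Real.volume_Ico] at hb1
    rw [Real.volume_Ioc] at hb2
    have hcalc : gaussianReal 0 1 (Set.Icc (-R) R \ Set.Icc (-r) r)
        ≤ ENNReal.ofReal (2 * (R - r)) := by
      calc gaussianReal 0 1 (Set.Icc (-R) R \ Set.Icc (-r) r)
          ≤ gaussianReal 0 1 (Set.Ico (-R) (-r) ∪ Set.Ioc r R) := measure_mono hdiffsub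
        _ ≤ gaussianReal 0 1 (Set.Ico (-R) (-r)) + gaussianReal 0 1 (Set.Ioc r R) :=
            measure_union_le _ _
        _ ≤ ENNReal.ofReal (-r - -R) + ENNReal.ofReal (R - r) := add_le_add hb1 hb2
        _ = ENNReal.ofReal (2 * (R - r)) := by
            rw [← ENNReal.ofReal_add (by linarith) (by linarith)]
            congr 1
            ring
    have h' := ENNReal.toReal_mono ENNReal.ofReal_ne_top hcalc
    rw [ENNReal.toReal_ofReal (by linarith)] at h'
    exact h'
  have hcc : c ^ 2 ≤ c := by nlinarith
  have hcR : c * R ≤ 1 := by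
    rw [← hrR]
    exact hr1
  have hchalf : 1/2 ≤ c := by nlinarith
  have hR2 : R ≤ 2 := by nlinarith
  have hfinal : 2 * (R - r) ≤ 4 * (1 - (v:ℝ)) := by
    rw [hrR, ← hc2]
    nlinarith [mul_nonneg (sub_nonneg.2 hc1) (sub_nonneg.2 hR2)]
  rw [hμH, hsplit2, ENNReal.toReal_add (measure_ne_top _ _) (measure_ne_top _ _)]
  linarith

end Gauss1D



section Product

/-- Comparison of two lintegrals of bounded functions against a probability measure. -/
lemma lintegral_diff_bound {α : Type*} [MeasurableSpace α] {ρ : Measure α}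
    [IsProbabilityMeasure ρ] {f g : α → ℝ≥0∞} (hf : Measurable f) (hg : Measurable g)
    (hf1 : ∀ y, f y ≤ 1) (hg1 : ∀ y, g y ≤ 1) {δ : α → ℝ} (hδi : Integrable δ ρ)
    (hδ : ∀ y, |(f y).toReal - (g y).toReal| ≤ δ y) :
    |(∫⁻ y, f y ∂ρ).toReal - (∫⁻ y, g y ∂ρ).toReal| ≤ ∫ y, δ y ∂ρ := by
  have hfin : ∀ᵐ y ∂ρ, f y < ∞ :=
    ae_of_all _ fun y => lt_of_le_of_lt (hf1 y) ENNReal.one_lt_top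
  have hgin : ∀ᵐ y ∂ρ, g y < ∞ :=
    ae_of_all _ fun y => lt_of_le_of_lt (hg1 y) ENNReal.one_lt_top
  have hFi : Integrable (fun y => (f y).toReal) ρ := by
    refine Integrable.mono' (integrable_const (1:ℝ))
      hf.ennreal_toReal.aestronglyMeasurable (ae_of_all _ fun y => ?_)
    rw [Real.norm_eq_abs, abs_of_nonneg ENNReal.toReal_nonneg]
    simpa using ENNReal.toReal_mono (by simp) (hf1 y)
  have hGi : Integrable (fun y => (g y).toReal) ρ := by
    refine Integrable.mono' (integrable_const (1:ℝ))
      hg.ennreal_toReal.aestronglyMeasurable (ae_of_all _ fun y => ?_)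
    rw [Real.norm_eq_abs, abs_of_nonneg ENNReal.toReal_nonneg]
    simpa using ENNReal.toReal_mono (by simp) (hg1 y)
  rw [← integral_toReal hf.aemeasurable hfin, ← integral_toReal hg.aemeasurable hgin,
    ← integral_sub hFi hGi]
  calc |∫ y, ((f y).toReal - (g y).toReal) ∂ρ|
      ≤ ∫ y, |(f y).toReal - (g y).toReal| ∂ρ := by
        simpa [Real.norm_eq_abs] using
          norm_integral_le_integral_norm (μ := ρ) (fun y => (f y).toReal - (g y).toReal)
    _ ≤ ∫ y, δ y ∂ρ := integral_mono (hFi.sub hGi).abs hδi hδ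

/-- Two product measures differing in one coordinate. -/
lemma pi_single {n : ℕ} (ξ ξ' : Fin (n+1) → Measure ℝ)
    [∀ i, IsProbabilityMeasure (ξ i)] [∀ i, IsProbabilityMeasure (ξ' i)]
    (k : Fin (n+1)) (hoff : ∀ i, i ≠ k → ξ i = ξ' i) {δ : ℝ}
    (hk : ∀ S : Set ℝ, MeasurableSet S → |(ξ k S).toReal - (ξ' k S).toReal| ≤ δ)
    {A : Set (Fin (n+1) → ℝ)} (hA : MeasurableSet A) :
    |(Measure.pi ξ A).toReal - (Measure.pi ξ' A).toReal| ≤ δ := by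
  classical
  set e := MeasurableEquiv.piFinSuccAbove (fun _ : Fin (n+1) => ℝ) k with he
  have h1 := measurePreserving_piFinSuccAbove ξ k
  have h2 := measurePreserving_piFinSuccAbove ξ' k
  have hrest : (Measure.pi fun j => ξ (k.succAbove j)) = Measure.pi fun j => ξ' (k.succAbove j) := by
    congr 1
    funext j
    exact hoff _ (Fin.succAbove_ne k j)
  set B : Set (ℝ × (Fin n → ℝ)) := e.symm ⁻¹' A with hB
  have hBm : MeasurableSet B := e.symm.measurable hA
  have hApre : e ⁻¹' B = A := by
    rw [hB, Set.preimage_preimage]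
    simp
  have hπξ : Measure.pi ξ A = ((ξ k).prod (Measure.pi fun j => ξ (k.succAbove j))) B := by
    rw [← h1.map_eq, Measure.map_apply e.measurable hBm, hApre]
  rw [← hrest] at h2
  have hπξ' : Measure.pi ξ' A = ((ξ' k).prod (Measure.pi fun j => ξ (k.succAbove j))) B := by
    rw [← h2.map_eq, Measure.map_apply e.measurable hBm, hApre]
  rw [hπξ, hπξ', Measure.prod_apply_symm hBm, Measure.prod_apply_symm hBm]
  have hfmeas := measurable_measure_prodMk_right (μ := ξ k) hBm
  have hgmeas := measurable_measure_prodMk_right (μ := ξ' k) hBm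
  have hres := lintegral_diff_bound (ρ := Measure.pi fun j => ξ (k.succAbove j))
    hfmeas hgmeas (fun y => prob_le_one) (fun y => prob_le_one)
    (integrable_const δ) (fun y => hk _ (measurable_prodMk_right hBm))
  simpa using hres

lemma telescope_abs (F : ℕ → ℝ) : ∀ d : ℕ, |F 0 - F d| ≤ ∑ j ∈ Finset.range d, |F j - F (j+1)|
  | 0 => by simp
  | (d+1) => by
    calc |F 0 - F (d+1)| ≤ |F 0 - F d| + |F d - F (d+1)| := abs_sub_le _ _ _
      _ ≤ (∑ j ∈ Finset.range d, |F j - F (j+1)|) + |F d - F (d+1)| := by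
          have := telescope_abs F d
          linarith
      _ = ∑ j ∈ Finset.range (d+1), |F j - F (j+1)| := (Finset.sum_range_succ _ _).symm

/-- TV-type comparison of two product measures. -/
lemma pi_tv {d : ℕ} (μs νs : Fin d → Measure ℝ)
    [∀ i, IsProbabilityMeasure (μs i)] [∀ i, IsProbabilityMeasure (νs i)]
    (δ : Fin d → ℝ)
    (h : ∀ i, ∀ S : Set ℝ, MeasurableSet S → |(μs i S).toReal - (νs i S).toReal| ≤ δ i)
    {A : Set (Fin d → ℝ)} (hA : MeasurableSet A) :
    |(Measure.pi μs A).toReal - (Measure.pi νs A).toReal| ≤ ∑ i, δ i := by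
  classical
  rcases d with - | n
  · have : μs = νs := funext fun i => i.elim0
    rw [this]
    simp
  set ξ : ℕ → Fin (n+1) → Measure ℝ := fun j i => if (i : ℕ) < j then νs i else μs i with hξ
  haveI : ∀ j i, IsProbabilityMeasure (ξ j i) := by
    intro j i
    rw [hξ]
    dsimp only
    split <;> infer_instance
  have h0 : ξ 0 = μs := by
    funext i
    simp [hξ]
  have hend : ξ (n+1) = νs := by
    funext i
    simp [hξ, i.isLt]
  have hstep : ∀ j, ∀ hj : j < n + 1,
      |(Measure.pi (ξ j) A).toReal - (Measure.pi (ξ (j+1)) A).toReal| ≤ δ ⟨j, hj⟩ := by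
    intro j hj
    refine pi_single (ξ j) (ξ (j+1)) ⟨j, hj⟩ ?_ ?_ hA
    · intro i hi
      have hne : (i : ℕ) ≠ j := by
        intro hc
        exact hi (Fin.ext hc)
      rw [hξ]
      dsimp only
      by_cases hlt : (i : ℕ) < j
      · rw [if_pos hlt, if_pos (by omega)]
      · rw [if_neg hlt, if_neg (by omega)]
    · intro S hS
      have hj1 : ξ j ⟨j, hj⟩ = μs ⟨j, hj⟩ := by simp [hξ]
      have hj2 : ξ (j+1) ⟨j, hj⟩ = νs ⟨j, hj⟩ := by simp [hξ]
      rw [hj1, hj2]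
      exact h _ S hS
  have htel := telescope_abs (fun j => (Measure.pi (ξ j) A).toReal) (n+1)
  rw [h0] at htel
  -- htel's endpoint: rewrite ξ (n+1) = νs
  have htel' : |(Measure.pi μs A).toReal - (Measure.pi νs A).toReal|
      ≤ ∑ j ∈ Finset.range (n+1),
          |(Measure.pi (ξ j) A).toReal - (Measure.pi (ξ (j+1)) A).toReal| := by
    calc |(Measure.pi μs A).toReal - (Measure.pi νs A).toReal|
        = |(Measure.pi μs A).toReal - (Measure.pi (ξ (n+1)) A).toReal| := by rw [hend]
      _ ≤ _ := by simpa using htel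
  refine le_trans htel' ?_
  have hsum : ∑ j ∈ Finset.range (n+1),
      |(Measure.pi (ξ j) A).toReal - (Measure.pi (ξ (j+1)) A).toReal|
      ≤ ∑ j ∈ Finset.range (n+1), (fun j => if hj : j < n+1 then δ ⟨j, hj⟩ else 0) j := by
    refine Finset.sum_le_sum fun j hj => ?_
    have hj' : j < n + 1 := Finset.mem_range.1 hj
    rw [dif_pos hj']
    exact hstep j hj'
  refine le_trans hsum ?_
  rw [← Fin.sum_univ_eq_sum_range (fun j => if hj : j < n+1 then δ ⟨j, hj⟩ else 0) (n+1)]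
  refine le_of_eq (Finset.sum_congr rfl fun i _ => ?_)
  rw [dif_pos i.isLt]

/-- Pushforward of the standard product Gaussian by a coordinatewise affine map. -/
lemma pi_map_affine {d : ℕ} (c : Fin d → ℝ) {b : ℝ} (hb : 0 < b) :
    Measure.map (fun (y : Fin d → ℝ) i => c i + b * y i)
        (Measure.pi fun _ : Fin d => gaussianReal 0 1)
      = Measure.pi fun i => gaussianReal (c i) (Real.toNNReal (b^2)) := by
  refine (Measure.pi_eq fun s hs => ?_).symm
  have hmeas : Measurable fun (y : Fin d → ℝ) i => c i + b * y i :=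
    measurable_pi_lambda _ fun i => by fun_prop
  rw [Measure.map_apply hmeas (MeasurableSet.univ_pi hs)]
  have hpre : (fun (y : Fin d → ℝ) i => c i + b * y i) ⁻¹' Set.pi Set.univ s
      = Set.pi Set.univ fun i => (fun t => c i + b * t) ⁻¹' s i := by
    ext y
    simp [Set.mem_pi]
  rw [hpre, Measure.pi_pi]
  refine Finset.prod_congr rfl fun i _ => ?_
  have h1 : gaussianReal 0 1 ((fun t => c i + b * t) ⁻¹' s i)
      = Measure.map (fun t => c i + b * t) (gaussianReal 0 1) (s i) :=
    (Measure.map_apply (by fun_prop) (hs i)).symm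
  rw [h1]
  have hcomp : (fun t : ℝ => c i + b * t) = (fun u : ℝ => u + c i) ∘ (fun t : ℝ => b * t) := by
    funext t
    simp [add_comm]
  rw [hcomp, ← Measure.map_map (measurable_add_const (c i)) (measurable_const_mul b)]
  rw [show (fun t : ℝ => b * t) = (b * ·) from rfl, gaussianReal_map_const_mul,
    show (fun u : ℝ => u + c i) = (· + c i) from rfl, gaussianReal_map_add_const]
  have hvv : (⟨b^2, sq_nonneg b⟩ : ℝ≥0) = Real.toNNReal (b^2) := by
    refine NNReal.coe_injective ?_
    simp [Real.coe_toNNReal _ (sq_nonneg b)]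
    rfl
  congr 1
  rw [show b * 0 + c i = c i by ring, mul_one]
  exact congrArg (gaussianReal (c i)) hvv

end Product



section MainAux

variable {Ω : Type*} [MeasurableSpace Ω]

set_option maxHeartbeats 1000000 in
/-- The central estimate: for `t ≥ 1`, per-set total variation bound. -/
lemma ou_main_bound (P : Measure Ω) [IsProbabilityMeasure P]
    (d : ℕ) (X₀ : Ω → (Fin d → ℝ)) (ε : Ω → (Fin d → ℝ))
    (hX₀ : Measurable X₀) (hε : Measurable ε)
    (hεd : Measure.map ε P = Measure.pi (fun _ => gaussianReal 0 1))
    (hindep : IndepFun X₀ ε P)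
    (hXi : ∀ i : Fin d, Integrable (fun ω => |X₀ ω i|) P)
    {t : ℝ} (ht : 1 ≤ t) {A : Set (Fin d → ℝ)} (hA : MeasurableSet A) :
    |((Measure.map (fun ω => fun i =>
          Real.exp (-t / 2) * X₀ ω i + Real.sqrt (1 - Real.exp (-t)) * ε ω i) P) A).toReal
        - ((Measure.pi fun _ : Fin d => gaussianReal 0 1) A).toReal|
      ≤ ((∑ i, ∫ ω, |X₀ ω i| ∂P) + 4 * d) * Real.exp (-t / 2) := by
  classical
  set a : ℝ := Real.exp (-t / 2) with ha
  set b : ℝ := Real.sqrt (1 - Real.exp (-t)) with hb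
  have ha0 : 0 < a := Real.exp_pos _
  have ha1 : a ≤ 1 := Real.exp_le_one_iff.mpr (by linarith)
  have h2e : (2:ℝ) ≤ Real.exp 1 := by linarith [Real.exp_one_gt_d9]
  have het : Real.exp (-t) ≤ 1/2 := by
    have h1 : Real.exp (-t) ≤ Real.exp (-1) := Real.exp_le_exp.2 (by linarith)
    have h2 : Real.exp (-1) * Real.exp 1 = 1 := by
      rw [← Real.exp_add]
      norm_num
    nlinarith [Real.exp_pos (-1)]
  have hv1 : (1:ℝ)/2 ≤ 1 - Real.exp (-t) := by linarith
  have hv2 : 1 - Real.exp (-t) < 1 := by linarith [Real.exp_pos (-t)]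
  set V : ℝ≥0 := Real.toNNReal (1 - Real.exp (-t)) with hV
  have hVcoe : (V:ℝ) = 1 - Real.exp (-t) := Real.coe_toNNReal _ (by linarith)
  have hVhalf : (1:ℝ)/2 ≤ (V:ℝ) := by rw [hVcoe]; exact hv1
  have hb0 : 0 < b := Real.sqrt_pos.2 (by linarith)
  have hbV : Real.toNNReal (b^2) = V := by
    rw [hb, Real.sq_sqrt (by linarith : (0:ℝ) ≤ 1 - Real.exp (-t))]
  have haa : a * a = Real.exp (-t) := by
    rw [ha, ← Real.exp_add]
    congr 1
    ring
  -- the affine map on the product space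
  have hGm : Measurable (fun p : (Fin d → ℝ) × (Fin d → ℝ) => fun i => a * p.1 i + b * p.2 i) :=
    measurable_pi_lambda _ fun i => by fun_prop
  haveI : IsProbabilityMeasure (Measure.map X₀ P) := Measure.isProbabilityMeasure_map hX₀.aemeasurable
  have hpair : Measure.map (fun ω => (X₀ ω, ε ω)) P
      = (Measure.map X₀ P).prod (Measure.pi fun _ : Fin d => gaussianReal 0 1) := by
    rw [← hεd]
    exact (indepFun_iff_map_prod_eq_prod_map_map hX₀.aemeasurable hε.aemeasurable).1 hindep
  have hmapF : Measure.map (fun ω => fun i => a * X₀ ω i + b * ε ω i) P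
      = Measure.map (fun p : (Fin d → ℝ) × (Fin d → ℝ) => fun i => a * p.1 i + b * p.2 i)
          ((Measure.map X₀ P).prod (Measure.pi fun _ : Fin d => gaussianReal 0 1)) := by
    rw [← hpair, Measure.map_map hGm (hX₀.prodMk hε)]
    rfl
  have hGA : MeasurableSet ((fun p : (Fin d → ℝ) × (Fin d → ℝ) =>
      fun i => a * p.1 i + b * p.2 i) ⁻¹' A) := hGm hA
  have e1 : (Measure.map (fun ω => fun i => a * X₀ ω i + b * ε ω i) P) A
      = ∫⁻ x, (Measure.pi fun _ : Fin d => gaussianReal 0 1)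
          (Prod.mk x ⁻¹' ((fun p : (Fin d → ℝ) × (Fin d → ℝ) =>
            fun i => a * p.1 i + b * p.2 i) ⁻¹' A)) ∂(Measure.map X₀ P) := by
    rw [hmapF, Measure.map_apply hGm hA, Measure.prod_apply hGA]
  have hslice : ∀ x : Fin d → ℝ,
      (Measure.pi fun _ : Fin d => gaussianReal 0 1)
          (Prod.mk x ⁻¹' ((fun p : (Fin d → ℝ) × (Fin d → ℝ) =>
            fun i => a * p.1 i + b * p.2 i) ⁻¹' A))
        = (Measure.pi fun i => gaussianReal (a * x i) V) A := by
    intro x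
    have haff : Measurable fun (y : Fin d → ℝ) i => a * x i + b * y i :=
      measurable_pi_lambda _ fun i => by fun_prop
    have hpre : (Prod.mk x ⁻¹' ((fun p : (Fin d → ℝ) × (Fin d → ℝ) =>
          fun i => a * p.1 i + b * p.2 i) ⁻¹' A))
        = (fun (y : Fin d → ℝ) i => a * x i + b * y i) ⁻¹' A := rfl
    rw [hpre, ← Measure.map_apply haff hA, pi_map_affine (fun i => a * x i) hb0, hbV]
  have hpoint : ∀ x : Fin d → ℝ,
      |((Measure.pi fun i => gaussianReal (a * x i) V) A).toReal
        - ((Measure.pi fun _ : Fin d => gaussianReal 0 V) A).toReal| ≤ ∑ i, |a * x i| :=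
    fun x => pi_tv _ _ (fun i => |a * x i|)
      (fun i S hS => gauss_shift_bound _ hVhalf hS) hA
  -- integrability of the bound against the law of X₀
  have hint : ∀ i : Fin d, Integrable (fun x : Fin d → ℝ => |a * x i|) (Measure.map X₀ P) := by
    intro i
    rw [integrable_map_measure ((measurable_pi_apply i).const_mul a).abs.aestronglyMeasurable
      hX₀.aemeasurable]
    have : (fun ω => |a * X₀ ω i|) = fun ω => |a| * |X₀ ω i| := by
      funext ω
      rw [abs_mul]
    show Integrable ((fun x : Fin d → ℝ => |a * x i|) ∘ X₀) P
    have hcomp : (fun x : Fin d → ℝ => |a * x i|) ∘ X₀ = fun ω => |a| * |X₀ ω i| := by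
      funext ω
      simp [Function.comp, abs_mul]
    rw [hcomp]
    exact (hXi i).const_mul _
  have hδint : Integrable (fun x : Fin d → ℝ => ∑ i, |a * x i|) (Measure.map X₀ P) :=
    integrable_finset_sum _ fun i _ => hint i
  have hδval : ∫ x, (∑ i, |a * x i|) ∂(Measure.map X₀ P)
      = a * ∑ i, ∫ ω, |X₀ ω i| ∂P := by
    rw [integral_finset_sum _ fun i _ => hint i]
    rw [Finset.mul_sum]
    refine Finset.sum_congr rfl fun i _ => ?_
    rw [integral_map hX₀.aemeasurable
      ((measurable_pi_apply i).const_mul a).abs.aestronglyMeasurable]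
    have : (fun ω => |a * X₀ ω i|) = fun ω => a * |X₀ ω i| := by
      funext ω
      rw [abs_mul, abs_of_pos ha0]
    rw [this, integral_const_mul]
  have hfm : Measurable fun x : Fin d → ℝ =>
      (Measure.pi fun _ : Fin d => gaussianReal 0 1)
        (Prod.mk x ⁻¹' ((fun p : (Fin d → ℝ) × (Fin d → ℝ) =>
          fun i => a * p.1 i + b * p.2 i) ⁻¹' A)) :=
    measurable_measure_prodMk_left hGA
  have hdb := lintegral_diff_bound (ρ := Measure.map X₀ P) hfm measurable_const
    (fun _ => prob_le_one) (fun _ => prob_le_one) hδint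
    (fun x => by
      rw [hslice x]
      exact hpoint x)
  rw [lintegral_const, measure_univ, mul_one, hδval] at hdb
  have hpart1 : |((Measure.map (fun ω => fun i => a * X₀ ω i + b * ε ω i) P) A).toReal
      - ((Measure.pi fun _ : Fin d => gaussianReal 0 V) A).toReal|
      ≤ a * ∑ i, ∫ ω, |X₀ ω i| ∂P := by
    rw [e1]
    exact hdb
  have hpart2 : |((Measure.pi fun _ : Fin d => gaussianReal 0 V) A).toReal
      - ((Measure.pi fun _ : Fin d => gaussianReal 0 1) A).toReal|
      ≤ ∑ _i : Fin d, 4 * (1 - (V:ℝ)) :=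
    pi_tv _ _ (fun _ => 4 * (1 - (V:ℝ)))
      (fun i S hS => gauss_var_bound hVhalf (by rw [hVcoe]; linarith) hS) hA
  have hsum2 : (∑ _i : Fin d, 4 * (1 - (V:ℝ))) = d * (4 * (a * a)) := by
    rw [Finset.sum_const, Finset.card_univ, Fintype.card_fin, nsmul_eq_mul, hVcoe,
      show (1:ℝ) - (1 - Real.exp (-t)) = Real.exp (-t) by ring, ← haa]
  have hKnn : 0 ≤ ∑ i, ∫ ω, |X₀ ω i| ∂P :=
    Finset.sum_nonneg fun i _ => integral_nonneg fun ω => abs_nonneg _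
  calc |((Measure.map (fun ω => fun i => a * X₀ ω i + b * ε ω i) P) A).toReal
        - ((Measure.pi fun _ : Fin d => gaussianReal 0 1) A).toReal|
      ≤ |((Measure.map (fun ω => fun i => a * X₀ ω i + b * ε ω i) P) A).toReal
          - ((Measure.pi fun _ : Fin d => gaussianReal 0 V) A).toReal|
        + |((Measure.pi fun _ : Fin d => gaussianReal 0 V) A).toReal
          - ((Measure.pi fun _ : Fin d => gaussianReal 0 1) A).toReal| := abs_sub_le _ _ _
    _ ≤ a * (∑ i, ∫ ω, |X₀ ω i| ∂P) + d * (4 * (a * a)) := by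
        rw [hsum2] at hpart2
        linarith
    _ ≤ ((∑ i, ∫ ω, |X₀ ω i| ∂P) + 4 * d) * a := by
        have haa2 : a * a ≤ a := by nlinarith
        have hd : (d:ℝ) * (4 * (a * a)) ≤ (d:ℝ) * (4 * a) :=
          mul_le_mul_of_nonneg_left (by linarith) (Nat.cast_nonneg d)
        have hring : a * (∑ i, ∫ ω, |X₀ ω i| ∂P) + (d:ℝ) * (4 * a)
            = ((∑ i, ∫ ω, |X₀ ω i| ∂P) + 4 * d) * a := by ring
        linarith

end MainAux

/-- If `X(t) ≝ e^{-t/2} X₀ + √(1-e^{-t}) ε` where `X₀` has sub-Gaussian tails (in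
particular `E‖X₀‖² < ∞`) and `ε ∼ N(0, I_d)` is independent of `X₀`, then
`d_TV(ℒ(X(t)), N(0,I_d)) ≤ C e^{-t/2}` for some constant `C` depending only on the law of
`X₀`; hence `X(t)` converges to `N(0, I_d)` in total variation as `t → ∞`. -/
theorem ou_tv_convergence
    {Ω : Type*} [MeasurableSpace Ω] (P : Measure Ω) [IsProbabilityMeasure P]
    (d : ℕ) (X₀ : Ω → (Fin d → ℝ)) (ε : Ω → (Fin d → ℝ))
    (hX₀ : Measurable X₀) (hε : Measurable ε)
    (hεd : Measure.map ε P = Measure.pi (fun _ => gaussianReal 0 1))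
    (hindep : IndepFun X₀ ε P)
    -- sub-Gaussian tails of `X₀`:
    (hsubG : ∃ c > (0:ℝ), ∃ C₀ > (0:ℝ), ∀ r : ℝ, 0 ≤ r →
      (P {ω | r < ‖(WithLp.equiv 2 (Fin d → ℝ)).symm (X₀ ω)‖}).toReal
        ≤ C₀ * Real.exp (-c * r ^ 2))
    (hmom : MemLp X₀ 2 P) :
    ∃ C : ℝ, (∀ t : ℝ, 0 ≤ t →
        tvDist
          (Measure.map
            (fun ω => fun i =>
              Real.exp (-t / 2) * X₀ ω i + Real.sqrt (1 - Real.exp (-t)) * ε ω i) P)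
          (Measure.pi (fun _ : Fin d => gaussianReal 0 1))
        ≤ C * Real.exp (-t / 2))
      ∧ Tendsto
          (fun t : ℝ =>
            tvDist
              (Measure.map
                (fun ω => fun i =>
                  Real.exp (-t / 2) * X₀ ω i + Real.sqrt (1 - Real.exp (-t)) * ε ω i) P)
              (Measure.pi (fun _ : Fin d => gaussianReal 0 1)))
          atTop (nhds 0) := by
  classical
  have hXint : Integrable X₀ P :=
    memLp_one_iff_integrable.1 (hmom.mono_exponent (by norm_num))
  have hXi : ∀ i : Fin d, Integrable (fun ω => |X₀ ω i|) P := by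
    intro i
    refine Integrable.mono' hXint.norm
      (((measurable_pi_apply i).comp hX₀).abs.aestronglyMeasurable)
      (ae_of_all _ fun ω => ?_)
    rw [Real.norm_eq_abs, abs_abs]
    calc |X₀ ω i| = ‖X₀ ω i‖ := (Real.norm_eq_abs _).symm
      _ ≤ ‖X₀ ω‖ := norm_le_pi_norm (X₀ ω) i
  set K : ℝ := ∑ i, ∫ ω, |X₀ ω i| ∂P with hK
  have hK0 : 0 ≤ K :=
    Finset.sum_nonneg fun i _ => integral_nonneg fun ω => abs_nonneg _
  have hbound : ∀ t : ℝ, 0 ≤ t →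
      tvDist (Measure.map (fun ω => fun i =>
          Real.exp (-t / 2) * X₀ ω i + Real.sqrt (1 - Real.exp (-t)) * ε ω i) P)
        (Measure.pi (fun _ : Fin d => gaussianReal 0 1))
      ≤ (K + 4 * d + Real.exp 1) * Real.exp (-t / 2) := by
    intro t ht
    have hF : Measurable (fun ω => fun i : Fin d =>
        Real.exp (-t / 2) * X₀ ω i + Real.sqrt (1 - Real.exp (-t)) * ε ω i) :=
      measurable_pi_lambda _ fun i => by fun_prop
    haveI : IsProbabilityMeasure (Measure.map (fun ω => fun i : Fin d =>
        Real.exp (-t / 2) * X₀ ω i + Real.sqrt (1 - Real.exp (-t)) * ε ω i) P) :=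
      Measure.isProbabilityMeasure_map hF.aemeasurable
    have hexp0 : 0 < Real.exp (-t / 2) := Real.exp_pos _
    have hCnn : (0:ℝ) ≤ K + 4 * d := by positivity
    rcases le_or_gt t 1 with h1 | h1
    · have hle1 : tvDist (Measure.map (fun ω => fun i : Fin d =>
          Real.exp (-t / 2) * X₀ ω i + Real.sqrt (1 - Real.exp (-t)) * ε ω i) P)
          (Measure.pi (fun _ : Fin d => gaussianReal 0 1)) ≤ 1 := tvDist_le_one
    
      have h2 : (1:ℝ) ≤ Real.exp 1 * Real.exp (-t / 2) := by
        rw [← Real.exp_add]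
        exact Real.one_le_exp (by linarith)
      calc tvDist (Measure.map (fun ω => fun i : Fin d =>
            Real.exp (-t / 2) * X₀ ω i + Real.sqrt (1 - Real.exp (-t)) * ε ω i) P)
            (Measure.pi (fun _ : Fin d => gaussianReal 0 1)) ≤ 1 := hle1
        _ ≤ Real.exp 1 * Real.exp (-t / 2) := h2
        _ ≤ (K + 4 * d + Real.exp 1) * Real.exp (-t / 2) := by nlinarith
    · refine tvDist_le_of_bound fun A hA => ?_
      have hmb := ou_main_bound P d X₀ ε hX₀ hε hεd hindep hXi h1.le hA
      rw [← hK] at hmb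
      refine le_trans hmb ?_
      nlinarith [Real.exp_pos (1:ℝ)]
  refine ⟨K + 4 * d + Real.exp 1, hbound, ?_⟩
  have htend : Tendsto (fun t : ℝ => (K + 4 * (d:ℝ) + Real.exp 1) * Real.exp (-t / 2))
      atTop (nhds 0) := by
    have h1 : Tendsto (fun t : ℝ => -t / 2) atTop atBot := by
      have heq : (fun t : ℝ => -t / 2) = fun t : ℝ => t * (-(1/2)) := by
        funext t
        ring
      rw [heq]
      exact Tendsto.atTop_mul_const_of_neg (by norm_num) tendsto_id
    have h2 := Real.tendsto_exp_atBot.comp h1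
    have h3 := h2.const_mul (K + 4 * (d:ℝ) + Real.exp 1)
    simpa using h3
  refine tendsto_of_tendsto_of_tendsto_of_le_of_le' tendsto_const_nhds htend ?_ ?_
  · exact Filter.Eventually.of_forall fun t => tvDist_nonneg'
  · filter_upwards [Filter.eventually_ge_atTop 0] with t ht using hbound t ht
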